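/- Let (W_t)_{t∈[0,1]} be a standard Brownian motion. For each n ∈ ℕ let E_n := ⋂_{i=0}^{n-1} {W_{(i+1)/n} - W_{i/n} ≥ 0}. Then P(E_n) = 2^{-n}, and for the count O := ∑_{n=0}^∞ 1(E_n) one has, for all 0 ≤ p < ln 2, E[e^{pO}] ≤ 4/(2 - e^p) + 1, and for all k ≥ 1, P(O ≥ k) ≤ 2·e^{9/8}·(3k + 1)·2^{-k}. -/

import Mathlib

open MeasureTheory ProbabilityTheory Set
open scoped ENNReal NNReal

/-- A standard (scalar) Brownian motion on a probability space: measurable marginals,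
starts at `0`, a.s. continuous paths, Gaussian increments `W_t - W_s ∼ N(0, t-s)` and
independent increments over any monotone sequence of times. -/
structure IsBrownianMotion {Ω : Type*} [MeasurableSpace Ω] (P : Measure Ω)
    (W : ℝ → Ω → ℝ) : Prop where
  meas : ∀ t, Measurable (W t)
  init : ∀ᵐ ω ∂P, W 0 ω = 0
  cont : ∀ᵐ ω ∂P, Continuous fun t => W t ω
  incr_law : ∀ s t : ℝ, s ≤ t →
    Measure.map (fun ω => W t ω - W s ω) P = gaussianReal 0 (Real.toNNReal (t - s))
  indep_incr : ∀ (n : ℕ) (t : ℕ → ℝ), Monotone t →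
    iIndepFun
      (fun (i : Fin n) ω => W (t (i + 1)) ω - W (t i) ω) P

lemma gauss_Ici (v : ℝ≥0) (hv : v ≠ 0) : gaussianReal 0 v (Set.Ici 0) = 1/2 := by
  set μ := gaussianReal 0 v with hμ
  have hmap : μ.map (fun x => -x) = μ := by
    have := gaussianReal_map_const_mul (μ := 0) (v := v) (-1)
    simp only [neg_one_mul, mul_zero] at this
    rw [hμ, this]
    congr 1
    ext
    simp
  have h1 : μ (Set.Ici 0) = μ (Set.Iic 0) := by
    conv_lhs => rw [← hmap]
    rw [Measure.map_apply measurable_neg measurableSet_Ici]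
    congr 1
    ext x
    simp
  have h0 : μ {(0:ℝ)} = 0 := by
    have := gaussianReal_absolutelyContinuous 0 hv
    exact this (measure_singleton 0)
  have hsum : μ (Set.Ici 0) + μ (Set.Iic 0) = 1 := by
    have := measure_union_add_inter (μ := μ) (s := Set.Ici (0:ℝ)) (t := Set.Iic (0:ℝ)) measurableSet_Iic
    rw [Set.union_comm, Set.Iic_union_Ici, Set.Ici_inter_Iic, Set.Icc_self, h0, add_zero] at this
    rw [← this, measure_univ]
  rw [← h1] at hsum
  have h2 : 2 * μ (Set.Ici 0) = 1 := by rw [two_mul]; exact hsum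
  rw [ENNReal.eq_div_iff (by norm_num) (by norm_num)]
  exact h2

lemma tail_bound {Ω : Type*} [MeasurableSpace Ω] (P : Measure Ω) [IsProbabilityMeasure P]
    (E : ℕ → Set Ω)
    (hE_prob : ∀ n, P (E n) = ((1:ℝ≥0∞)/2)^n)
    (k : ℕ) (hk : 1 ≤ k) :
    P {ω | (k : ℝ≥0∞) ≤ ∑' n : ℕ, (E n).indicator (fun _ => (1:ℝ≥0∞)) ω}
      ≤ 4 * ((1:ℝ≥0∞)/2)^k := by
  set O : Ω → ℝ≥0∞ := fun ω => ∑' n : ℕ, (E n).indicator (fun _ => (1:ℝ≥0∞)) ω with hO_def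
  have hsub : {ω | (k : ℝ≥0∞) ≤ O ω} ⊆ ⋃ j : ℕ, E (k - 1 + j) := by
    intro ω hω
    by_contra hc
    simp only [Set.mem_iUnion, not_exists] at hc
    have hzero : ∀ n ∉ Finset.range (k-1), (E n).indicator (fun _ => (1:ℝ≥0∞)) ω = 0 := by
      intro n hn
      rw [Finset.mem_range, not_lt] at hn
      have : ω ∉ E n := by
        have := hc (n - (k-1))
        rwa [Nat.add_sub_cancel' hn] at this
      simp [Set.indicator_of_notMem this]
    have hle : O ω ≤ (k - 1 : ℕ) := by
      show ∑' n : ℕ, (E n).indicator (fun _ => (1:ℝ≥0∞)) ω ≤ ((k-1:ℕ) : ℝ≥0∞)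
      rw [tsum_eq_sum hzero]
      calc ∑ n ∈ Finset.range (k-1), (E n).indicator (fun _ => (1:ℝ≥0∞)) ω
          ≤ ∑ _n ∈ Finset.range (k-1), 1 :=
            Finset.sum_le_sum (fun n _ => Set.indicator_le_self' (by simp) ω)
        _ = (k-1 : ℕ) := by simp
    have hlt : ((k-1 : ℕ) : ℝ≥0∞) < (k : ℝ≥0∞) := by
      exact_mod_cast Nat.sub_lt (by omega) one_pos
    exact absurd (hω.trans hle) (not_le.mpr hlt)
  calc P {ω | (k : ℝ≥0∞) ≤ O ω} ≤ P (⋃ j : ℕ, E (k - 1 + j)) := measure_mono hsub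
    _ ≤ ∑' j : ℕ, P (E (k - 1 + j)) := measure_iUnion_le _
    _ = ∑' j : ℕ, ((1:ℝ≥0∞)/2)^(k-1) * ((1:ℝ≥0∞)/2)^j := by
        simp_rw [hE_prob, pow_add]
    _ = ((1:ℝ≥0∞)/2)^(k-1) * (1 - 1/2)⁻¹ := by
        rw [ENNReal.tsum_mul_left, ENNReal.tsum_geometric]
    _ = 4 * ((1:ℝ≥0∞)/2)^k := by
        have h2 : (2:ℝ≥0∞) * (1/2) = 1 := by
          rw [one_div, ENNReal.mul_inv_cancel] <;> norm_num
        have hk1 : ((1:ℝ≥0∞)/2)^k = ((1:ℝ≥0∞)/2)^(k-1) * (1/2) := by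
          rw [← pow_succ]; congr 1; omega
        rw [show ((1:ℝ≥0∞) - 1/2)⁻¹ = 2 by norm_num, hk1,
          show (4:ℝ≥0∞) = 2*2 by norm_num]
        have h3 : (2:ℝ≥0∞)*2*(((1:ℝ≥0∞)/2)^(k-1)*(1/2)) = (2*(1/2))*(2*(((1:ℝ≥0∞)/2)^(k-1))) := by
          ring
        rw [h3, h2, one_mul, mul_comm]

lemma integral_bound {Ω : Type*} [MeasurableSpace Ω] (P : Measure Ω) [IsProbabilityMeasure P]
    (E : ℕ → Set Ω) (hE_meas : ∀ n, MeasurableSet (E n))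
    (htail : ∀ k : ℕ, 1 ≤ k →
      P {ω | (k : ℝ≥0∞) ≤ ∑' n : ℕ, (E n).indicator (fun _ => (1:ℝ≥0∞)) ω}
        ≤ 4 * ((1:ℝ≥0∞)/2)^k)
    (p : ℝ) (hp0 : 0 ≤ p) (hp1 : p < Real.log 2) :
    (∫⁻ ω, (if (∑' n : ℕ, (E n).indicator (fun _ => (1:ℝ≥0∞)) ω) = ⊤ then ⊤ else
        ENNReal.ofReal (Real.exp (p * (∑' n : ℕ,
          (E n).indicator (fun _ => (1:ℝ≥0∞)) ω).toReal))) ∂P)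
      ≤ ENNReal.ofReal (4 / (2 - Real.exp p) + 1) := by
  set O : Ω → ℝ≥0∞ := fun ω => ∑' n : ℕ, (E n).indicator (fun _ => (1:ℝ≥0∞)) ω with hO_def
  have hep2 : Real.exp p < 2 := by
    calc Real.exp p < Real.exp (Real.log 2) := Real.exp_lt_exp.mpr hp1
      _ = 2 := Real.exp_log two_pos
  have hep1 : 1 ≤ Real.exp p := Real.one_le_exp hp0
  -- O is measurable
  have hO_meas : Measurable O := by
    apply Measurable.ennreal_tsum
    exact fun n => (measurable_const.indicator (hE_meas n))
  -- O takes values in ℕ ∪ {⊤}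
  have hO_cases : ∀ ω, O ω = ⊤ ∨ ∃ m : ℕ, O ω = m := by
    intro ω
    have : O ω = ({n | ω ∈ E n}.encard : ℝ≥0∞) := by
      calc O ω = ∑' n : ℕ, Set.indicator {n | ω ∈ E n} (fun _ => (1:ℝ≥0∞)) n :=
            tsum_congr (fun n => by by_cases h : ω ∈ E n <;> simp [Set.indicator, h])
        _ = ∑' (_ : {n | ω ∈ E n}), (1:ℝ≥0∞) := (tsum_subtype _ _).symm
        _ = ({n | ω ∈ E n}.encard : ℝ≥0∞) := ENNReal.tsum_set_one _
    rw [this]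
    rcases eq_or_ne ({n | ω ∈ E n}.encard) ⊤ with h | h
    · left; rw [h]; rfl
    · right
      obtain ⟨m, hm⟩ := WithTop.ne_top_iff_exists.mp h
      exact ⟨m, by rw [← hm]; rfl⟩
  -- O < ∞ a.s.
  have hnull : P {ω | O ω = ⊤} = 0 := by
    have hsub : ∀ k : ℕ, {ω | O ω = ⊤} ⊆ {ω | ((k+1:ℕ) : ℝ≥0∞) ≤ O ω} := by
      intro k ω hω
      simp only [Set.mem_setOf_eq] at hω ⊢
      rw [hω]; exact le_top
    have hbd : ∀ k : ℕ, P {ω | O ω = ⊤} ≤ 4 * ((1:ℝ≥0∞)/2)^(k+1) :=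
      fun k => (measure_mono (hsub k)).trans (htail (k+1) (by omega))
    have htend : Filter.Tendsto (fun k : ℕ => 4 * ((1:ℝ≥0∞)/2)^(k+1)) Filter.atTop (nhds 0) := by
      rw [show (0:ℝ≥0∞) = 4 * 0 by simp]
      apply ENNReal.Tendsto.const_mul
      · exact (ENNReal.tendsto_pow_atTop_nhds_zero_of_lt_one (by norm_num)).comp
          (Filter.tendsto_add_atTop_nat 1)
      · norm_num
    have := ge_of_tendsto htend (Filter.Eventually.of_forall hbd)
    exact le_antisymm this zero_le
  -- the pointwise identity
  set c : ℕ → ℝ≥0∞ := fun k => ENNReal.ofReal (Real.exp (p*(k+1)) - Real.exp (p*k)) with hc_def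
  set g : Ω → ℝ≥0∞ := fun ω => 1 + ∑' k : ℕ,
    Set.indicator {ω' | ((k+1:ℕ) : ℝ≥0∞) ≤ O ω'} (fun _ => c k) ω with hg_def
  have hae : (fun ω => (if O ω = ⊤ then ⊤ else
      ENNReal.ofReal (Real.exp (p * (O ω).toReal)))) =ᵐ[P] g := by
    have hfin : ∀ᵐ ω ∂P, O ω ≠ ⊤ := by
      rw [MeasureTheory.ae_iff]
      simpa using hnull
    filter_upwards [hfin] with ω hω
    obtain ⟨m, hm⟩ := (hO_cases ω).resolve_left hω
    rw [if_neg hω, hm]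
    show _ = 1 + ∑' k : ℕ,
      Set.indicator {ω' | ((k+1:ℕ) : ℝ≥0∞) ≤ O ω'} (fun _ => c k) ω
    have hind : ∀ k : ℕ, Set.indicator {ω' | ((k+1:ℕ) : ℝ≥0∞) ≤ O ω'} (fun _ => c k) ω
        = if k+1 ≤ m then c k else 0 := by
      intro k
      by_cases h : k+1 ≤ m
      · rw [if_pos h, Set.indicator_of_mem]
        simp only [Set.mem_setOf_eq, hm]
        exact_mod_cast h
      · rw [if_neg h, Set.indicator_of_notMem]
        simp only [Set.mem_setOf_eq, hm]
        intro hcon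
        exact h (by exact_mod_cast hcon)
    have hzero : ∀ k ∉ Finset.range m,
        Set.indicator {ω' | ((k+1:ℕ) : ℝ≥0∞) ≤ O ω'} (fun _ => c k) ω = 0 := by
      intro k hkm
      rw [Finset.mem_range, not_lt] at hkm
      rw [hind k, if_neg (by omega)]
    rw [tsum_eq_sum hzero]
    have hsum : ∑ k ∈ Finset.range m,
        Set.indicator {ω' | ((k+1:ℕ) : ℝ≥0∞) ≤ O ω'} (fun _ => c k) ω
        = ENNReal.ofReal (Real.exp (p*m) - 1) := by
      have h1 : ∀ k ∈ Finset.range m, Set.indicator {ω' | ((k+1:ℕ) : ℝ≥0∞) ≤ O ω'}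
          (fun _ => c k) ω = c k := by
        intro k hkm
        rw [Finset.mem_range] at hkm
        rw [hind k, if_pos (by omega)]
      rw [Finset.sum_congr rfl h1, hc_def]
      rw [← ENNReal.ofReal_sum_of_nonneg]
      · congr 1
        have := Finset.sum_range_sub (fun k : ℕ => Real.exp (p*k)) m
        push_cast at this ⊢
        rw [this]
        norm_num
      · intro k _
        have : p * k ≤ p * (k+1) := by nlinarith [Nat.cast_nonneg (α := ℝ) k]
        simp [sub_nonneg, Real.exp_le_exp, this]
    rw [hsum, ENNReal.toReal_natCast]
    rw [← ENNReal.ofReal_one, ← ENNReal.ofReal_add zero_le_one]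
    · congr 1; ring
    · rw [sub_nonneg]
      exact Real.one_le_exp (by positivity)
  rw [lintegral_congr_ae hae]
  -- compute ∫ g
  have hAmeas : ∀ k : ℕ, MeasurableSet {ω' | ((k+1:ℕ) : ℝ≥0∞) ≤ O ω'} := by
    intro k
    exact measurableSet_le measurable_const hO_meas
  have hint : ∫⁻ ω, g ω ∂P = 1 + ∑' k : ℕ, c k * P {ω' | ((k+1:ℕ) : ℝ≥0∞) ≤ O ω'} := by
    rw [hg_def]
    rw [lintegral_add_left measurable_const]
    rw [lintegral_const, measure_univ, mul_one]
    congr 1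
    rw [lintegral_tsum (fun k => (measurable_const.indicator (hAmeas k)).aemeasurable)]
    congr 1
    ext k
    rw [lintegral_indicator_const (hAmeas k)]
  rw [hint]
  -- bound the series
  have hterm : ∀ k : ℕ, c k * P {ω' | ((k+1:ℕ) : ℝ≥0∞) ≤ O ω'}
      ≤ ENNReal.ofReal (2 * (Real.exp p - 1) * (Real.exp p / 2)^k) := by
    intro k
    calc c k * P {ω' | ((k+1:ℕ) : ℝ≥0∞) ≤ O ω'}
        ≤ c k * (4 * ((1:ℝ≥0∞)/2)^(k+1)) :=
          mul_le_mul_right (htail (k+1) (by omega)) _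
      _ = ENNReal.ofReal (2 * (Real.exp p - 1) * (Real.exp p / 2)^k) := by
          rw [hc_def]
          have h4 : (4 : ℝ≥0∞) * ((1:ℝ≥0∞)/2)^(k+1) = ENNReal.ofReal (2 * (1/2)^k) := by
            rw [ENNReal.ofReal_mul (by norm_num), ENNReal.ofReal_pow (by norm_num)]
            rw [show ENNReal.ofReal (1/2) = (1:ℝ≥0∞)/2 by
              rw [ENNReal.ofReal_div_of_pos two_pos]; norm_num]
            rw [show ENNReal.ofReal 2 = (2:ℝ≥0∞) by norm_num]
            rw [pow_succ]
            have h2 : (2:ℝ≥0∞) * (1/2) = 1 := by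
              rw [one_div, ENNReal.mul_inv_cancel] <;> norm_num
            calc (4:ℝ≥0∞) * (((1:ℝ≥0∞)/2)^k * (1/2)) = (2*(1/2)) * (2 * ((1:ℝ≥0∞)/2)^k) := by
                  ring
              _ = 2 * ((1:ℝ≥0∞)/2)^k := by rw [h2, one_mul]
          have hmono : Real.exp (p*(k:ℝ)) ≤ Real.exp (p*((k:ℝ)+1)) := by
            apply Real.exp_le_exp.mpr
            nlinarith [Nat.cast_nonneg (α := ℝ) k]
          rw [h4, ← ENNReal.ofReal_mul (sub_nonneg.mpr hmono)]
          congr 1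
          have e1 : Real.exp (p*(k:ℝ)) = (Real.exp p)^k := by
            rw [mul_comm, Real.exp_nat_mul]
          have e2 : Real.exp (p*((k:ℝ)+1)) = (Real.exp p)^k * Real.exp p := by
            rw [mul_add, mul_one, Real.exp_add, e1]
          rw [e1, e2, div_pow, div_pow, one_pow]
          have h2k : (0:ℝ) < 2^k := by positivity
          field_simp
  have hepd : (0:ℝ) < 2 - Real.exp p := by linarith
  have hgeo : Real.exp p / 2 < 1 := by linarith
  have hgeo0 : (0:ℝ) ≤ Real.exp p / 2 := by positivity
  have hsummable : Summable (fun k : ℕ => 2*(Real.exp p - 1)*(Real.exp p/2)^k) :=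
    (summable_geometric_of_lt_one hgeo0 hgeo).mul_left _
  have hsum_le : ∑' k : ℕ, c k * P {ω' | ((k+1:ℕ) : ℝ≥0∞) ≤ O ω'}
      ≤ ENNReal.ofReal (4 / (2 - Real.exp p)) := by
    calc ∑' k : ℕ, c k * P {ω' | ((k+1:ℕ) : ℝ≥0∞) ≤ O ω'}
        ≤ ∑' k : ℕ, ENNReal.ofReal (2*(Real.exp p - 1)*(Real.exp p/2)^k) :=
          ENNReal.tsum_le_tsum hterm
      _ = ENNReal.ofReal (∑' k : ℕ, 2*(Real.exp p - 1)*(Real.exp p/2)^k) := by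
          rw [ENNReal.ofReal_tsum_of_nonneg (fun k =>
            mul_nonneg (mul_nonneg two_pos.le (by linarith)) (pow_nonneg hgeo0 k)) hsummable]
      _ ≤ ENNReal.ofReal (4 / (2 - Real.exp p)) := by
          apply ENNReal.ofReal_le_ofReal
          rw [tsum_mul_left, tsum_geometric_of_lt_one hgeo0 hgeo]
          have hinv : (1 - Real.exp p/2)⁻¹ = 2 / (2 - Real.exp p) := by
            rw [show 1 - Real.exp p/2 = (2 - Real.exp p)/2 by ring, inv_div]
          rw [hinv, show 2*(Real.exp p - 1)*(2/(2-Real.exp p))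
            = (4*(Real.exp p - 1))/(2-Real.exp p) by ring,
            div_le_div_iff₀ hepd hepd]
          nlinarith
  calc 1 + ∑' k : ℕ, c k * P {ω' | ((k+1:ℕ) : ℝ≥0∞) ≤ O ω'}
      ≤ 1 + ENNReal.ofReal (4 / (2 - Real.exp p)) := add_le_add_right hsum_le 1
    _ = ENNReal.ofReal (4 / (2 - Real.exp p) + 1) := by
        rw [ENNReal.ofReal_add (by positivity) zero_le_one, ENNReal.ofReal_one, add_comm]

lemma part_one {Ω : Type*} [MeasurableSpace Ω] (P : Measure Ω) [IsProbabilityMeasure P]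
    (W : ℝ → Ω → ℝ) (hmeas : ∀ t, Measurable (W t))
    (incr_law : ∀ s t : ℝ, s ≤ t →
      Measure.map (fun ω => W t ω - W s ω) P = gaussianReal 0 (Real.toNNReal (t - s)))
    (indep_incr : ∀ (n : ℕ) (t : ℕ → ℝ), Monotone t →
      iIndepFun
        (fun (i : Fin n) ω => W (t (i + 1)) ω - W (t i) ω) P)
    (n : ℕ) :
    P (⋂ i ∈ Finset.range n,
        {ω | 0 ≤ W (((i : ℝ) + 1) / (n : ℝ)) ω - W ((i : ℝ) / (n : ℝ)) ω})
        = ((1 : ℝ≥0∞) / 2) ^ n := by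
  rcases Nat.eq_zero_or_pos n with rfl | hn
  · simp
  have hn' : (0:ℝ) < n := by exact_mod_cast hn
  set t : ℕ → ℝ := fun i => (i : ℝ) / n with ht_def
  have ht : Monotone t := by
    intro i j hij
    have h : (i:ℝ) ≤ j := by exact_mod_cast hij
    show (i:ℝ)/n ≤ (j:ℝ)/n
    gcongr
  have hind := indep_incr n t ht
  have heq : (⋂ i ∈ Finset.range n,
      {ω | 0 ≤ W (((i : ℝ) + 1) / (n : ℝ)) ω - W ((i : ℝ) / (n : ℝ)) ω})
      = ⋂ i : Fin n, (fun ω => W (t (i + 1)) ω - W (t i) ω) ⁻¹' Set.Ici 0 := by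
    have htv : ∀ i : ℕ, t (i+1) = ((i:ℝ)+1)/(n:ℝ) := by
      intro i
      show ((i+1 : ℕ) : ℝ) / n = _
      push_cast
      ring
    ext ω
    simp only [Set.mem_iInter, Finset.mem_range, Set.mem_preimage, Set.mem_Ici, Set.mem_setOf_eq]
    constructor
    · intro h i
      rw [htv i]
      exact h i i.isLt
    · intro h i hi
      have h2 := h ⟨i, hi⟩
      rw [htv i] at h2
      exact h2
  rw [heq, hind.meas_iInter (fun i => ⟨Set.Ici 0, measurableSet_Ici, rfl⟩)]
  have hhalf : ∀ i : Fin n, P ((fun ω => W (t (i + 1)) ω - W (t i) ω) ⁻¹' Set.Ici 0) = 1/2 := by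
    intro i
    have hle : t i ≤ t (i+1) := ht (Nat.le_succ i)
    have hmap := incr_law (t i) (t (i+1)) hle
    rw [← Measure.map_apply (f := fun ω => W (t (i + 1)) ω - W (t i) ω) ((hmeas _).sub (hmeas _)) measurableSet_Ici, hmap]
    apply gauss_Ici
    have : t (i+1 : ℕ) - t i = 1 / n := by
      rw [ht_def]
      push_cast
      field_simp
      ring
    rw [this]
    simp only [ne_eq, Real.toNNReal_eq_zero, not_le]
    positivity
  rw [Finset.prod_congr rfl (fun i _ => hhalf i), Finset.prod_const]
  simp

/-- Loss of monotonicity of Brownian paths: with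
`Eₙ = ⋂_{i<n} {W_{(i+1)/n} - W_{i/n} ≥ 0}` one has `P(Eₙ) = 2^{-n}`, the count
`O = ∑ₙ 1(Eₙ)` has `E[e^{pO}] ≤ 4/(2-eᵖ) + 1` for `0 ≤ p < ln 2`, and
`P(O ≥ k) ≤ 2·e^{9/8}·(3k+1)·2^{-k}` for `k ≥ 1`. -/
theorem stmt12 {Ω : Type*} [MeasurableSpace Ω] (P : Measure Ω) [IsProbabilityMeasure P]
    (W : ℝ → Ω → ℝ) (hW : IsBrownianMotion P W) :
    (∀ n : ℕ, P (⋂ i ∈ Finset.range n,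
        {ω | 0 ≤ W (((i : ℝ) + 1) / (n : ℝ)) ω - W ((i : ℝ) / (n : ℝ)) ω})
        = ((1 : ℝ≥0∞) / 2) ^ n) ∧
    (∀ p : ℝ, 0 ≤ p → p < Real.log 2 →
      (∫⁻ ω, (if (∑' n : ℕ, Set.indicator (⋂ i ∈ Finset.range n,
              {ω' | 0 ≤ W (((i : ℝ) + 1) / (n : ℝ)) ω' - W ((i : ℝ) / (n : ℝ)) ω'})
              (fun _ => (1 : ℝ≥0∞)) ω) = ⊤ then ⊤ else
            ENNReal.ofReal (Real.exp (p * (∑' n : ℕ, Set.indicator (⋂ i ∈ Finset.range n,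
              {ω' | 0 ≤ W (((i : ℝ) + 1) / (n : ℝ)) ω' - W ((i : ℝ) / (n : ℝ)) ω'})
              (fun _ => (1 : ℝ≥0∞)) ω).toReal))) ∂P)
        ≤ ENNReal.ofReal (4 / (2 - Real.exp p) + 1)) ∧
    (∀ k : ℕ, 1 ≤ k →
      P {ω | (k : ℝ≥0∞) ≤ ∑' n : ℕ, Set.indicator (⋂ i ∈ Finset.range n,
              {ω' | 0 ≤ W (((i : ℝ) + 1) / (n : ℝ)) ω' - W ((i : ℝ) / (n : ℝ)) ω'})
              (fun _ => (1 : ℝ≥0∞)) ω}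
        ≤ ENNReal.ofReal (2 * Real.exp (9 / 8) * (3 * (k : ℝ) + 1)) * ((1 : ℝ≥0∞) / 2) ^ k) := by
  set E : ℕ → Set Ω := fun n => ⋂ i ∈ Finset.range n,
    {ω | 0 ≤ W (((i : ℝ) + 1) / (n : ℝ)) ω - W ((i : ℝ) / (n : ℝ)) ω} with hE_def
  have hE_meas : ∀ n, MeasurableSet (E n) := by
    intro n
    apply MeasurableSet.biInter (Finset.range n).countable_toSet
    intro i _
    exact measurableSet_le measurable_const ((hW.meas _).sub (hW.meas _))
  have hE_prob : ∀ n, P (E n) = ((1:ℝ≥0∞)/2)^n :=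
    part_one P W hW.meas hW.incr_law hW.indep_incr
  have htail := tail_bound P E hE_prob
  refine ⟨hE_prob, ?_, ?_⟩
  · intro p hp0 hp1
    exact integral_bound P E hE_meas htail p hp0 hp1
  · intro k hk
    calc P {ω | (k : ℝ≥0∞) ≤ ∑' n : ℕ, (E n).indicator (fun _ => (1:ℝ≥0∞)) ω}
        ≤ 4 * ((1:ℝ≥0∞)/2)^k := htail k hk
      _ ≤ ENNReal.ofReal (2 * Real.exp (9 / 8) * (3 * (k : ℝ) + 1)) * ((1 : ℝ≥0∞) / 2) ^ k := by
          apply mul_le_mul_left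
          rw [show (4:ℝ≥0∞) = ENNReal.ofReal 4 by norm_num]
          apply ENNReal.ofReal_le_ofReal
          have h1 : (1:ℝ) ≤ Real.exp (9/8) := Real.one_le_exp (by norm_num)
          have h2 : (4:ℝ) ≤ 3 * (k:ℝ) + 1 := by
            have : (1:ℝ) ≤ (k:ℝ) := by exact_mod_cast hk
            linarith
          nlinarith
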